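/- Let X be a geodesic metric space, let Γ be a group with finite generating set S equipped with the word metric d_S, and suppose X is quasi-isometric to (Γ, d_S). Then there exists a function f₁ : [0,∞) → [0,∞) such that every bounded subset Ω ⊆ X satisfies diam(Ω) ≤ f₁(diam(∂Ω)), where ∂Ω denotes the topological frontier of Ω in X (the closure of Ω minus the interior of Ω), and the diameter of the empty set is taken to be 0. -/

import Mathlib

open Metric Set

/-- A metric space is geodesic if any two points are joined by an isometrically
embedded segment. -/
def IsGeodesicSpace (X : Type*) [MetricSpace X] : Prop :=
  ∀ x y : X, ∃ γ : ℝ → X, γ 0 = x ∧ γ (dist x y) = y ∧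
    ∀ s ∈ Set.Icc (0 : ℝ) (dist x y), ∀ t ∈ Set.Icc (0 : ℝ) (dist x y),
      dist (γ s) (γ t) = |s - t|

/-- The word metric on a group `Γ` relative to a generating set `S`:
`wordDist S g h` is the least `n` such that `g⁻¹ * h` is a product of `n`
elements of `S ∪ S⁻¹`. -/
noncomputable def wordDist {Γ : Type*} [Group Γ] (S : Set Γ) (g h : Γ) : ℕ :=
  sInf {n : ℕ | ∃ l : List Γ, l.length = n ∧ (∀ a ∈ l, a ∈ S ∨ a⁻¹ ∈ S) ∧
    l.prod = g⁻¹ * h}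


section WordDist

variable {Γ : Type*} [Group Γ] {S : Set Γ}

lemma wd_nonempty (hgen : Subgroup.closure S = ⊤) (g h : Γ) :
    {n : ℕ | ∃ l : List Γ, l.length = n ∧ (∀ a ∈ l, a ∈ S ∨ a⁻¹ ∈ S) ∧
      l.prod = g⁻¹ * h}.Nonempty := by
  have hmem : g⁻¹ * h ∈ (Subgroup.closure S).toSubmonoid := by
    rw [hgen]; trivial
  rw [Subgroup.closure_toSubmonoid] at hmem
  obtain ⟨l, hl, hp⟩ := Submonoid.exists_list_of_mem_closure hmem
  exact ⟨l.length, l, rfl, fun a ha => by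
    rcases hl a ha with h | h
    · exact Or.inl h
    · exact Or.inr (Set.mem_inv.mp h), hp⟩

lemma wd_spec (hgen : Subgroup.closure S = ⊤) (g h : Γ) :
    ∃ l : List Γ, l.length = wordDist S g h ∧ (∀ a ∈ l, a ∈ S ∨ a⁻¹ ∈ S) ∧
      l.prod = g⁻¹ * h :=
  Nat.sInf_mem (wd_nonempty hgen g h)

lemma wd_le (g h : Γ) {l : List Γ} (hc : ∀ a ∈ l, a ∈ S ∨ a⁻¹ ∈ S)
    (hp : l.prod = g⁻¹ * h) : wordDist S g h ≤ l.length :=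
  Nat.sInf_le ⟨l, rfl, hc, hp⟩

lemma wd_self (g : Γ) : wordDist S g g = 0 :=
  Nat.le_zero.mp (wd_le g g (l := []) (by simp) (by simp))

lemma wd_comm (hgen : Subgroup.closure S = ⊤) (g h : Γ) :
    wordDist S g h = wordDist S h g := by
  have key : ∀ a b : Γ, wordDist S b a ≤ wordDist S a b := by
    intro a b
    obtain ⟨l, hlen, hc, hp⟩ := wd_spec hgen a b
    have hc' : ∀ x ∈ (l.reverse.map (·⁻¹)), x ∈ S ∨ x⁻¹ ∈ S := by
      intro x hx
      simp only [List.mem_map, List.mem_reverse] at hx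
      obtain ⟨y, hy, rfl⟩ := hx
      rcases hc y hy with h | h
      · exact Or.inr (by simpa using h)
      · exact Or.inl h
    have hp' : (l.reverse.map (·⁻¹)).prod = b⁻¹ * a := by
      rw [List.map_reverse, ← List.prod_inv_reverse, hp]; simp
    calc wordDist S b a ≤ (l.reverse.map (·⁻¹)).length := wd_le b a hc' hp'
      _ = wordDist S a b := by simp [hlen]
  exact le_antisymm (key h g) (key g h)

lemma wd_triangle (hgen : Subgroup.closure S = ⊤) (g h k : Γ) :
    wordDist S g k ≤ wordDist S g h + wordDist S h k := by
  obtain ⟨l1, hl1, hc1, hp1⟩ := wd_spec hgen g h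
  obtain ⟨l2, hl2, hc2, hp2⟩ := wd_spec hgen h k
  have hc : ∀ a ∈ l1 ++ l2, a ∈ S ∨ a⁻¹ ∈ S := by
    intro a ha
    rcases List.mem_append.mp ha with h | h
    exacts [hc1 a h, hc2 a h]
  have hp : (l1 ++ l2).prod = g⁻¹ * k := by
    rw [List.prod_append, hp1, hp2]; group
  calc wordDist S g k ≤ (l1 ++ l2).length := wd_le g k hc hp
    _ = _ := by simp [hl1, hl2]

lemma wd_mul_left (a g h : Γ) : wordDist S (a * g) (a * h) = wordDist S g h := by
  unfold wordDist
  congr 1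
  ext n
  constructor <;> (rintro ⟨l, h1, h2, h3⟩; exact ⟨l, h1, h2, by rw [h3]; group⟩)

end WordDist

section Balls

variable {Γ : Type*} [Group Γ] {S : Set Γ}

lemma finite_ball (hfin : S.Finite) (hgen : Subgroup.closure S = ⊤) (n : ℕ) :
    {g : Γ | wordDist S 1 g ≤ n}.Finite := by
  have hA : ∀ m : ℕ, {g : Γ | ∃ l : List Γ, l.length ≤ m ∧
      (∀ a ∈ l, a ∈ S ∨ a⁻¹ ∈ S) ∧ l.prod = g}.Finite := by
    intro m
    induction m with
    | zero =>
      apply Set.Finite.subset (Set.finite_singleton (1 : Γ))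
      rintro g ⟨l, hl, -, hp⟩
      simp only [Nat.le_zero, List.length_eq_zero_iff] at hl
      simp [hl] at hp
      simp [← hp]
    | succ m ih =>
      apply Set.Finite.subset (ih.union
        ((hfin.union hfin.inv).biUnion (fun a _ => ih.image (fun x => a * x))))
      rintro g ⟨l, hl, hc, hp⟩
      match l with
      | [] => exact Or.inl ⟨[], by simp, by simp, hp⟩
      | a :: l' =>
        right
        refine Set.mem_biUnion (x := a) ?_ (⟨l'.prod, ⟨l', ?_, ?_, rfl⟩, ?_⟩ :
          g ∈ (fun x => a * x) '' {g | ∃ l : List Γ, l.length ≤ m ∧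
            (∀ a ∈ l, a ∈ S ∨ a⁻¹ ∈ S) ∧ l.prod = g})
        · rcases hc a (by simp) with h | h
          · exact Or.inl h
          · exact Or.inr (Set.mem_inv.mpr h)
        · simp only [List.length_cons] at hl; omega
        · exact fun b hb => hc b (by simp [hb])
        · rw [← hp]; simp
  apply Set.Finite.subset (hA n)
  intro g hg
  obtain ⟨l, hlen, hc, hp⟩ := wd_spec (S := S) hgen 1 g
  exact ⟨l, by rw [hlen]; exact hg, hc, by rw [hp]; group⟩

end Balls

section Pocket

variable {Γ : Type*} [Group Γ] {S : Set Γ}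

lemma exists_pred (hgen : Subgroup.closure S = ⊤) {g : Γ}
    (h1 : 1 ≤ wordDist S 1 g) :
    ∃ g' : Γ, wordDist S 1 g' + 1 = wordDist S 1 g ∧ wordDist S g' g ≤ 1 := by
  obtain ⟨l, hlen, hc, hp⟩ := wd_spec hgen 1 g
  have hp' : l.prod = g := by rw [hp]; group
  have hne : l ≠ [] := by
    intro h; rw [h] at hlen; simp at hlen; omega
  set a := l.getLast hne with ha
  set g' := l.dropLast.prod with hg'
  have hsplit : g' * a = g := by
    have := List.dropLast_append_getLast hne
    calc l.dropLast.prod * l.getLast hne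
        = (l.dropLast ++ [l.getLast hne]).prod := by rw [List.prod_append]; simp
      _ = g := by rw [this, hp']
  have h2 : wordDist S 1 g' ≤ l.length - 1 := by
    have := wd_le (S := S) 1 g' (l := l.dropLast)
      (fun b hb => hc b (List.dropLast_subset l hb)) (by rw [hg']; group)
    simpa [List.length_dropLast] using this
  have h3 : wordDist S g' g ≤ 1 := by
    have := wd_le (S := S) g' g (l := [a])
      (by intro b hb; simp at hb; subst hb; exact hc a (List.getLast_mem hne))
      (by simp; rw [← hsplit]; group)
    simpa using this
  have htri := wd_triangle hgen 1 g' g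
  exact ⟨g', by omega, h3⟩

/-- one step of the chain, staying outside the ball of radius `ρ`. -/
def WStep (S : Set Γ) (ρ : ℕ) (a b : Γ) : Prop :=
  wordDist S a b ≤ 1 ∧ ρ < wordDist S 1 a ∧ ρ < wordDist S 1 b

lemma wstep_symm (hgen : Subgroup.closure S = ⊤) : Symmetric (WStep S ρ) := by
  rintro a b ⟨h1, h2, h3⟩
  exact ⟨by rwa [wd_comm hgen], h3, h2⟩

lemma reach_symm (hgen : Subgroup.closure S = ⊤) {ρ : ℕ} {a b : Γ}
    (h : Relation.ReflTransGen (WStep S ρ) a b) :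
    Relation.ReflTransGen (WStep S ρ) b a :=
  haveI : Std.Symm (WStep S ρ) := ⟨wstep_symm hgen⟩
  Std.Symm.symm _ _ h

lemma to_sphere (hgen : Subgroup.closure S = ⊤) (ρ : ℕ) :
    ∀ n (g : Γ), wordDist S 1 g = n → ρ < n →
      ∃ h, wordDist S 1 h = ρ + 1 ∧ Relation.ReflTransGen (WStep S ρ) h g := by
  intro n
  induction n using Nat.strong_induction_on with
  | _ n ih =>
    intro g hg hρ
    rcases eq_or_lt_of_le (Nat.succ_le_of_lt hρ) with heq | hlt
    · exact ⟨g, by omega, Relation.ReflTransGen.refl⟩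
    · obtain ⟨g', hg', hstep⟩ := exists_pred hgen (g := g) (by omega)
      obtain ⟨h, hh, hr⟩ := ih (wordDist S 1 g') (by omega) g' rfl (by omega)
      exact ⟨h, hh, hr.tail ⟨hstep, by omega, by omega⟩⟩

lemma exists_far (hfin : S.Finite) (hgen : Subgroup.closure S = ⊤) [Infinite Γ]
    (n : ℕ) : ∃ g : Γ, n < wordDist S 1 g := by
  by_contra hcon
  push_neg at hcon
  have : (Set.univ : Set Γ).Finite :=
    (finite_ball hfin hgen n).subset (fun g _ => hcon g)
  exact Set.infinite_univ this

lemma pocket (hfin : S.Finite) (hgen : Subgroup.closure S = ⊤) [Infinite Γ]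
    (ρ : ℕ) : ∃ N : ℕ, ρ < N ∧ ∀ g : Γ, N < wordDist S 1 g →
      ∀ R : ℕ, ∃ h, Relation.ReflTransGen (WStep S ρ) g h ∧ R ≤ wordDist S 1 h := by
  by_contra hcon
  push_neg at hcon
  choose g hg R hR using fun n : ℕ => hcon (ρ + n + 1) (by omega)
  choose h hh hr using fun n : ℕ =>
    to_sphere hgen ρ (wordDist S 1 (g n)) (g n) rfl (by have := hg n; omega)
  haveI : Finite ↥{x : Γ | wordDist S 1 x ≤ ρ + 1} :=
    (finite_ball hfin hgen (ρ + 1)).to_subtype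
  obtain ⟨b, hb⟩ := Finite.exists_infinite_fiber
    (fun n : ℕ => (⟨h n, le_of_eq (hh n)⟩ : {x : Γ | wordDist S 1 x ≤ ρ + 1}))
  have hbset := Set.infinite_coe_iff.mp hb
  obtain ⟨m, hm, -⟩ := hbset.exists_gt 0
  obtain ⟨n, hn, hmn⟩ := hbset.exists_gt (R m)
  simp only [Set.mem_preimage, Set.mem_singleton_iff] at hm hn
  have hreach : Relation.ReflTransGen (WStep S ρ) (g m) (g n) := by
    have h1 : Relation.ReflTransGen (WStep S ρ) (g m) (h m) := reach_symm hgen (hr m)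
    have h2 : h m = h n := by
      have := hm.trans hn.symm
      exact congrArg Subtype.val this
    exact h1.trans (h2 ▸ hr n)
  have := hR m (g n) hreach
  have := hg n
  omega

end Pocket

section Cross

variable {X : Type*} [MetricSpace X]

lemma cross (hgeo : IsGeodesicSpace X) (Ω : Set X) {x y : X}
    (hx : x ∈ closure Ω) (hy : y ∉ closure Ω) :
    ∃ z ∈ frontier Ω, dist x z ≤ dist x y := by
  obtain ⟨γ, h0, h1, hiso⟩ := hgeo x y
  set δ := dist x y with hδdef
  have hδ : 0 ≤ δ := dist_nonneg
  have hcont : ContinuousOn γ (Icc 0 δ) := by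
    apply LipschitzOnWith.continuousOn (K := 1)
    apply LipschitzOnWith.of_dist_le_mul
    intro s hs t ht
    rw [hiso s hs t ht, Real.dist_eq]
    simp
  have hK : IsPreconnected (γ '' Icc 0 δ) := isPreconnected_Icc.image γ hcont
  by_contra hc
  push_neg at hc
  have himg : ∀ t ∈ Icc 0 δ, γ t ∉ frontier Ω := by
    intro t ht hf
    have hd : dist x (γ t) = t := by
      rw [← h0, hiso 0 ⟨le_refl 0, hδ⟩ t ht]
      rw [abs_of_nonpos (by linarith [ht.1])]
      ring
    have := hc _ hf
    rw [hd] at this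
    exact absurd this (not_lt.2 ht.2)
  have hsub : γ '' Icc 0 δ ⊆ interior Ω ∪ (closure Ω)ᶜ := by
    rintro z ⟨t, ht, rfl⟩
    by_cases hz : γ t ∈ closure Ω
    · left
      have : γ t ∈ closure Ω \ frontier Ω := ⟨hz, himg t ht⟩
      rwa [closure_diff_frontier] at this
    · exact Or.inr hz
  have hx' : x ∈ γ '' Icc 0 δ ∩ interior Ω := by
    refine ⟨⟨0, ⟨le_refl 0, hδ⟩, h0⟩, ?_⟩
    have : x ∈ closure Ω \ frontier Ω := ⟨hx, h0 ▸ himg 0 ⟨le_refl 0, hδ⟩⟩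
    rwa [closure_diff_frontier] at this
  have hy' : y ∈ γ '' Icc 0 δ ∩ (closure Ω)ᶜ :=
    ⟨⟨δ, ⟨hδ, le_refl δ⟩, h1⟩, hy⟩
  obtain ⟨w, -, hw1, hw2⟩ := hK (interior Ω) (closure Ω)ᶜ isOpen_interior
    isClosed_closure.isOpen_compl hsub ⟨x, hx'⟩ ⟨y, hy'⟩
  exact hw2 (subset_closure (interior_subset hw1))

end Cross

/-- **Isodiametric control (Lemma 4.5).** If a geodesic metric space `X` is quasi-isometric
to a finitely generated group, then there is a function `f₁ : [0,∞) → [0,∞)` such that every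
bounded subset `Ω ⊆ X` satisfies `diam Ω ≤ f₁ (diam (frontier Ω))`. -/
theorem diam_le_of_diam_frontier
    {X : Type*} [MetricSpace X] (hgeo : IsGeodesicSpace X)
    {Γ : Type*} [Group Γ] (S : Set Γ) (hfin : S.Finite) (hgen : Subgroup.closure S = ⊤)
    (hqi : ∃ (lam C : ℝ) (f : X → Γ), 1 ≤ lam ∧ 0 ≤ C ∧
      (∀ x x' : X, lam⁻¹ * dist x x' - C ≤ (wordDist S (f x) (f x') : ℝ) ∧
        (wordDist S (f x) (f x') : ℝ) ≤ lam * dist x x' + C) ∧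
      (∀ g : Γ, ∃ x : X, (wordDist S (f x) g : ℝ) ≤ C)) :
    ∃ f₁ : ℝ → ℝ, (∀ r : ℝ, 0 ≤ r → 0 ≤ f₁ r) ∧
      ∀ Ω : Set X, Bornology.IsBounded Ω →
        Metric.diam Ω ≤ f₁ (Metric.diam (frontier Ω)) := by
  classical
  obtain ⟨lam, C, f, hlam, hC, hQI, hsurj⟩ := hqi
  have hlam0 : (0:ℝ) < lam := by linarith
  have key : ∀ r : ℝ, ∃ M : ℝ, 0 ≤ M ∧ ∀ Ω : Set X, Bornology.IsBounded Ω →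
      Metric.diam (frontier Ω) ≤ r → Metric.diam Ω ≤ M := by
    intro r
    rcases finite_or_infinite Γ with hF | hI
    · -- finite group: X is bounded
      have hW : ∃ W : ℕ, ∀ g h : Γ, wordDist S g h ≤ W := by
        have hfin2 : (Set.range (fun p : Γ × Γ => wordDist S p.1 p.2)).Finite :=
          Set.finite_range _
        obtain ⟨W, hWub⟩ := hfin2.bddAbove
        exact ⟨W, fun g h => hWub ⟨(g, h), rfl⟩⟩
      obtain ⟨W, hW⟩ := hW
      have hM : (0:ℝ) ≤ lam * ((W:ℝ) + C + C) := by positivity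
      refine ⟨lam * ((W:ℝ) + C + C), hM, fun Ω _ _ => ?_⟩
      apply Metric.diam_le_of_forall_dist_le hM
      intro a _ b _
      have hlow := (hQI a b).1
      have hub : (wordDist S (f a) (f b) : ℝ) ≤ (W:ℝ) := by
        exact_mod_cast hW (f a) (f b)
      have h1 : lam⁻¹ * dist a b ≤ (W:ℝ) + C := by linarith
      calc dist a b = lam * (lam⁻¹ * dist a b) := by field_simp
        _ ≤ lam * ((W:ℝ) + C) := mul_le_mul_of_nonneg_left h1 (le_of_lt hlam0)
        _ ≤ lam * ((W:ℝ) + C + C) := mul_le_mul_of_nonneg_left (by linarith) (le_of_lt hlam0)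
    · -- infinite group
      set r' : ℝ := max r 0 with hr'def
      have hr'0 : 0 ≤ r' := le_max_right _ _
      set step : ℝ := lam * (1 + 3 * C) with hstepdef
      have hstep0 : 0 ≤ step := by positivity
      set ρ : ℕ := ⌈lam * (r' + step) + 2 * C⌉₊ + 1 with hρdef
      have hρge : lam * (r' + step) + 2 * C + 1 ≤ (ρ : ℝ) := by
        have := Nat.le_ceil (lam * (r' + step) + 2 * C)
        push_cast [hρdef]
        linarith
      obtain ⟨N, hρN, hN⟩ := pocket hfin hgen ρ
      have hM : (0:ℝ) ≤ 2 * (lam * ((N:ℝ) + C)) := by positivity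
      refine ⟨2 * (lam * ((N:ℝ) + C)), hM, fun Ω hΩ hfr => ?_⟩
      rcases Set.eq_empty_or_nonempty Ω with hΩe | ⟨x₀, hx₀⟩
      · rw [hΩe, Metric.diam_empty]; exact hM
      rcases Set.eq_empty_or_nonempty (frontier Ω) with hfe | ⟨p₀, hp₀⟩
      · -- empty frontier: Ω = univ, contradicting boundedness
        exfalso
        have hclo : ∀ y : X, y ∈ closure Ω := by
          intro y
          by_contra hy
          obtain ⟨z, hz, -⟩ := cross hgeo Ω (subset_closure hx₀) hy
          rw [hfe] at hz
          exact hz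
        obtain ⟨RΩ, hRΩ⟩ := hΩ.closure.subset_closedBall x₀
        have hRΩ0 : 0 ≤ RΩ := by
          have := hRΩ (hclo x₀); simpa using this
        set n : ℕ := ⌈lam * RΩ + 2 * C⌉₊ with hndef
        obtain ⟨gfar, hgfar⟩ := exists_far hfin hgen n
        obtain ⟨y, hy⟩ := hsurj (f x₀ * gfar)
        have h1 : wordDist S 1 gfar = wordDist S (f x₀) (f x₀ * gfar) := by
          rw [← wd_mul_left (f x₀) 1 gfar, mul_one]
        have htri := wd_triangle hgen (f x₀) (f y) (f x₀ * gfar)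
        have htri' : (wordDist S (f x₀) (f x₀ * gfar) : ℝ) ≤
            (wordDist S (f x₀) (f y) : ℝ) + (wordDist S (f y) (f x₀ * gfar) : ℝ) := by
          exact_mod_cast htri
        have hub := (hQI x₀ y).2
        have hdy : dist x₀ y ≤ RΩ := by
          have := hRΩ (hclo y); rw [Metric.mem_closedBall] at this; linarith [dist_comm x₀ y ▸ this]
        have hn : (n : ℝ) ≥ lam * RΩ + 2 * C := Nat.le_ceil _
        have hflo : (n : ℝ) + 1 ≤ (wordDist S 1 gfar : ℝ) := by exact_mod_cast hgfar
        rw [h1] at hflo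
        have : dist x₀ y ≤ RΩ := hdy
        nlinarith [mul_le_mul_of_nonneg_left hdy (le_of_lt hlam0)]
      -- main case
      have hfrbd : Bornology.IsBounded (frontier Ω) :=
        hΩ.closure.subset frontier_subset_closure
      have hfrb : ∀ z ∈ frontier Ω, dist z p₀ ≤ r' := by
        intro z hz
        have := Metric.dist_le_diam_of_mem hfrbd hz hp₀
        have h2 : Metric.diam (frontier Ω) ≤ r' := le_trans hfr (le_max_left _ _)
        linarith
      have seg : ∀ w z : X, w ∈ closure Ω → dist w z ≤ step →
          r' + step < dist w p₀ → z ∈ closure Ω := by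
        intro w z hw hdist hfar
        by_contra hz
        obtain ⟨q, hq, hqd⟩ := cross hgeo Ω hw hz
        have h1 : dist q p₀ ≤ r' := hfrb q hq
        have h2 := dist_triangle w q p₀
        linarith
      set g₀ : Γ := f p₀ with hg₀def
      have farA : ∀ w : X, ((ρ:ℝ) + 1 - C ≤ (wordDist S g₀ (f w) : ℝ)) →
          r' + step < dist w p₀ := by
        intro w hwd
        have hub := (hQI w p₀).2
        have hcomm : wordDist S g₀ (f w) = wordDist S (f w) (f p₀) := wd_comm hgen _ _
        rw [hcomm] at hwd
        have h2 : lam * (r' + step) < lam * dist w p₀ := by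
          have hd := dist_comm w p₀
          nlinarith [hub]
        exact lt_of_mul_lt_mul_left h2 (le_of_lt hlam0) |>.trans_le' le_rfl
      have claim : ∀ x ∈ Ω, wordDist S g₀ (f x) ≤ N := by
        intro x hx
        by_contra hbig
        push_neg at hbig
        set u : Γ := g₀⁻¹ * f x with hudef
        have hu : wordDist S 1 u = wordDist S g₀ (f x) := by
          rw [← wd_mul_left g₀ 1 u, mul_one, hudef]
          group
        obtain ⟨RΩ, hRΩ⟩ := hΩ.closure.subset_closedBall p₀
        have hRΩ0 : 0 ≤ RΩ := by
          have := hRΩ (frontier_subset_closure hp₀); simpa using this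
        set Rt : ℕ := ⌈lam * RΩ + 2 * C⌉₊ + 1 with hRtdef
        obtain ⟨hend, hreach, hfarend⟩ := hN u (by rw [hu]; omega) Rt
        have main : ∀ c : Γ, Relation.ReflTransGen (WStep S ρ) u c →
            ∀ y : X, (wordDist S (f y) (g₀ * c) : ℝ) ≤ C → y ∈ closure Ω := by
          intro c hrc
          induction hrc with
          | refl =>
            intro y hy
            have hgu : g₀ * u = f x := by rw [hudef]; group
            rw [hgu] at hy
            have hlow := (hQI x y).1
            have hwd : (wordDist S (f x) (f y) : ℝ) ≤ C := by
              rw [wd_comm hgen]; exact hy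
            have hdxy : dist x y ≤ step := by
              rw [hstepdef]
              have h1 : lam⁻¹ * dist x y ≤ 2 * C := by linarith
              calc dist x y = lam * (lam⁻¹ * dist x y) := by field_simp
                _ ≤ lam * (2 * C) := mul_le_mul_of_nonneg_left h1 (le_of_lt hlam0)
                _ ≤ lam * (1 + 3 * C) := mul_le_mul_of_nonneg_left (by linarith) (le_of_lt hlam0)
            apply seg x y (subset_closure hx) hdxy
            apply farA x
            have hge : ρ + 1 ≤ wordDist S g₀ (f x) := by omega
            have : ((ρ:ℝ)) + 1 ≤ (wordDist S g₀ (f x) : ℝ) := by exact_mod_cast hge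
            linarith
          | tail hab hbc ih =>
            rename_i b c
            intro y hy
            obtain ⟨yb, hyb⟩ := hsurj (g₀ * b)
            have hybcl : yb ∈ closure Ω := ih yb hyb
            obtain ⟨hbc1, hbc2, hbc3⟩ := hbc
            have t1 : wordDist S (g₀ * b) (g₀ * c) ≤ 1 := by
              rw [wd_mul_left]; exact hbc1
            have tri1 := wd_triangle hgen (f yb) (g₀ * b) (g₀ * c)
            have tri2 := wd_triangle hgen (f yb) (g₀ * c) (f y)
            have hcy : (wordDist S (g₀ * c) (f y) : ℝ) ≤ C := by
              rw [wd_comm hgen]; exact hy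
            have hby : (wordDist S (f yb) (g₀ * b) : ℝ) ≤ C := hyb
            have hbig2 : (wordDist S (f yb) (f y) : ℝ) ≤ 1 + 2 * C := by
              have c1 : (wordDist S (f yb) (f y) : ℝ) ≤
                  (wordDist S (f yb) (g₀ * c) : ℝ) + (wordDist S (g₀ * c) (f y) : ℝ) := by
                exact_mod_cast tri2
              have c2 : (wordDist S (f yb) (g₀ * c) : ℝ) ≤
                  (wordDist S (f yb) (g₀ * b) : ℝ) + (wordDist S (g₀ * b) (g₀ * c) : ℝ) := by
                exact_mod_cast tri1
              have c3 : (wordDist S (g₀ * b) (g₀ * c) : ℝ) ≤ 1 := by exact_mod_cast t1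
              linarith
            have hlow := (hQI yb y).1
            have hdxy : dist yb y ≤ step := by
              rw [hstepdef]
              have h1 : lam⁻¹ * dist yb y ≤ 1 + 3 * C := by linarith
              calc dist yb y = lam * (lam⁻¹ * dist yb y) := by field_simp
                _ ≤ lam * (1 + 3 * C) := mul_le_mul_of_nonneg_left h1 (le_of_lt hlam0)
            apply seg yb y hybcl hdxy
            apply farA yb
            have e1 : wordDist S 1 b = wordDist S g₀ (g₀ * b) := by
              rw [← wd_mul_left g₀ 1 b, mul_one]
            have tri3 := wd_triangle hgen g₀ (f yb) (g₀ * b)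
            have c4 : (wordDist S g₀ (g₀ * b) : ℝ) ≤
                (wordDist S g₀ (f yb) : ℝ) + (wordDist S (f yb) (g₀ * b) : ℝ) := by
              exact_mod_cast tri3
            have c5 : ((ρ:ℝ)) + 1 ≤ (wordDist S g₀ (g₀ * b) : ℝ) := by
              rw [← e1]; exact_mod_cast hbc2
            linarith
        obtain ⟨ye, hye⟩ := hsurj (g₀ * hend)
        have hyecl := main hend hreach ye hye
        have hd : dist ye p₀ ≤ RΩ := by
          have := hRΩ hyecl; rwa [Metric.mem_closedBall] at this
        have e1 : wordDist S 1 hend = wordDist S g₀ (g₀ * hend) := by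
          rw [← wd_mul_left g₀ 1 hend, mul_one]
        have tri := wd_triangle hgen g₀ (f ye) (g₀ * hend)
        have c4 : (wordDist S g₀ (g₀ * hend) : ℝ) ≤
            (wordDist S g₀ (f ye) : ℝ) + (wordDist S (f ye) (g₀ * hend) : ℝ) := by
          exact_mod_cast tri
        have c5 : ((Rt:ℝ)) ≤ (wordDist S g₀ (g₀ * hend) : ℝ) := by
          rw [← e1]; exact_mod_cast hfarend
        have hub := (hQI ye p₀).2
        have hcomm : (wordDist S g₀ (f ye) : ℝ) = (wordDist S (f ye) (f p₀) : ℝ) := by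
          rw [wd_comm hgen]
        have hRt : lam * RΩ + 2 * C + 1 ≤ (Rt : ℝ) := by
          have := Nat.le_ceil (lam * RΩ + 2 * C)
          push_cast [hRtdef]
          linarith
        nlinarith [mul_le_mul_of_nonneg_left hd (le_of_lt hlam0)]
      -- conclude the diameter bound
      apply Metric.diam_le_of_forall_dist_le hM
      intro a ha b hb
      have bound : ∀ w ∈ Ω, dist w p₀ ≤ lam * ((N:ℝ) + C) := by
        intro w hw
        have hlow := (hQI w p₀).1
        have hle : (wordDist S (f w) (f p₀) : ℝ) ≤ (N:ℝ) := by
          have := claim w hw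
          rw [wd_comm hgen] at this
          exact_mod_cast this
        have h1 : lam⁻¹ * dist w p₀ ≤ (N:ℝ) + C := by linarith
        calc dist w p₀ = lam * (lam⁻¹ * dist w p₀) := by field_simp
          _ ≤ lam * ((N:ℝ) + C) := mul_le_mul_of_nonneg_left h1 (le_of_lt hlam0)
      have h1 := bound a ha
      have h2 := bound b hb
      have h3 := dist_triangle a p₀ b
      have h4 : dist p₀ b = dist b p₀ := dist_comm _ _
      linarith
  choose f₁ h0 h1 using key
  exact ⟨f₁, fun r _ => h0 r, fun Ω hb => h1 _ Ω hb le_rfl⟩
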